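/- Let X be a topological space and let A be a functionally closed subset of X which is well-covered in X. Then A is an L-retract in X, i.e., there exists a continuous mapping ψ : X → L(A) with ψ(a) = π_A(a) for every a ∈ A. -/

import Mathlib

open Set Topology

/-- `C_p(X)`: the continuous real-valued functions on `X`, topologized by pointwise
convergence (i.e. as a subspace of `X → ℝ` with the product topology). -/
abbrev Cp (X : Type*) [TopologicalSpace X] : Type _ := {f : X → ℝ // Continuous f}

/-- `C_p*(X)`: the bounded continuous real-valued functions on `X`, topologized by
pointwise convergence. -/
abbrev CpStar (X : Type*) [TopologicalSpace X] : Type _ :=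
  {f : X → ℝ // Continuous f ∧ ∃ M : ℝ, ∀ x, |f x| ≤ M}

/-- A set is functionally open (a cozero set) if it is the cozero set of a
continuous real-valued function. -/
def FunctionallyOpen {X : Type*} [TopologicalSpace X] (U : Set X) : Prop :=
  ∃ f : X → ℝ, Continuous f ∧ U = f ⁻¹' ({0}ᶜ)

/-- A subset `A` is strongly functionally discrete in `X` if there is a family of
functionally open sets `G a ∋ a` (for `a ∈ A`) which is discrete in `X`: every point
of `X` has a neighborhood meeting `G a` for at most one `a ∈ A`. -/
def StronglyFunctionallyDiscrete {X : Type*} [TopologicalSpace X] (A : Set X) : Prop :=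
  ∃ G : A → Set X,
    (∀ a : A, (a : X) ∈ G a) ∧
    (∀ a : A, FunctionallyOpen (G a)) ∧
    (∀ x : X, ∃ V ∈ 𝓝 x, {a : A | (V ∩ G a).Nonempty}.Subsingleton)

/-- `A` is well-covered in `X`: there are a sequence of locally finite families
`(U n i : i ∈ I n)` of functionally open subsets of `X`, each covering `A`, and
continuous maps `lam n i : closure (U n i) → A`, such that for every `a ∈ A` and every
neighborhood `V` of `a` in `A` there are `n₀` and a neighborhood `U₀` of `a` in `X`
with `lam n i (U n i ∩ U₀) ⊆ V` for all `n ≥ n₀` and all `i`. -/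
def WellCovered.{u, v} {X : Type v} [TopologicalSpace X] (A : Set X) : Prop :=
  ∃ (I : ℕ → Type u) (U : ∀ n, I n → Set X)
    (lam : ∀ (n) (i : I n), closure (U n i) → A),
    (∀ n i, FunctionallyOpen (U n i)) ∧
    (∀ (n) (x : X), ∃ V ∈ 𝓝 x, {i : I n | (V ∩ U n i).Nonempty}.Finite) ∧
    (∀ n, A ⊆ ⋃ i, U n i) ∧
    (∀ n i, Continuous (lam n i)) ∧
    (∀ (a : X) (ha : a ∈ A), ∀ V : Set A, V ∈ 𝓝 (⟨a, ha⟩ : A) →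
      ∃ (n₀ : ℕ) (U₀ : Set X), U₀ ∈ 𝓝 a ∧
        ∀ n ≥ n₀, ∀ (i : I n) (x : X) (hx : x ∈ U n i ∩ U₀),
          lam n i ⟨x, subset_closure hx.1⟩ ∈ V)

/-- `L(A)`: the linear span of the evaluation functionals `π_A(a) : C_p(A) → ℝ`,
`a ∈ A`, as a subspace of `C_p(C_p(A))` (pointwise topology on `C_p(A)`). -/
def LSet (A : Type*) [TopologicalSpace A] : Set (Cp A → ℝ) :=
  {F | ∃ (n : ℕ) (x : Fin n → A) (α : Fin n → ℝ),
    F = fun y : Cp A => ∑ i, α i * y.1 (x i)}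

lemma lset_zero (A : Type*) [TopologicalSpace A] : (fun _ : Cp A => (0:ℝ)) ∈ LSet A :=
  ⟨0, Fin.elim0, Fin.elim0, by funext y; simp⟩

lemma lset_single {A : Type*} [TopologicalSpace A] (c : ℝ) (p : A) :
    (fun y : Cp A => c * y.1 p) ∈ LSet A :=
  ⟨1, fun _ => p, fun _ => c, by funext y; simp⟩

lemma lset_add {A : Type*} [TopologicalSpace A] {F G : Cp A → ℝ}
    (hF : F ∈ LSet A) (hG : G ∈ LSet A) : (fun y => F y + G y) ∈ LSet A := by
  obtain ⟨n, xs, α, rfl⟩ := hF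
  obtain ⟨m, xt, β, rfl⟩ := hG
  refine ⟨n + m, Fin.append xs xt, Fin.append α β, ?_⟩
  funext y
  simp [Fin.sum_univ_add, Fin.append_left, Fin.append_right]

lemma lset_finsetSum {A : Type*} [TopologicalSpace A] {ι : Type*} (s : Finset ι)
    (G : ι → Cp A → ℝ) (h : ∀ i ∈ s, G i ∈ LSet A) :
    (fun y => ∑ i ∈ s, G i y) ∈ LSet A := by
  classical
  induction s using Finset.induction_on with
  | empty => simpa using lset_zero A
  | insert _ _ ha ih =>
    rename_i a s
    simp only [Finset.sum_insert ha]
    exact lset_add (h a (Finset.mem_insert_self a s))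
      (ih fun i hi => h i (Finset.mem_insert_of_mem hi))


set_option maxHeartbeats 2000000 in
/-- Theorem 4.3: a well-covered functionally closed subset `A` of `X` is an
`L`-retract in `X`: there is a continuous `ψ : X → L(A)` with `ψ(a) = π_A(a)` on `A`. -/
theorem stmt_17 {X : Type v} [TopologicalSpace X] (A : Set X)
    (hA : FunctionallyOpen Aᶜ) (hwc : WellCovered.{u} A) :
    ∃ ψ : X → LSet A, Continuous ψ ∧
      ∀ (a : X) (ha : a ∈ A), (ψ a).1 = fun y : Cp A => y.1 ⟨a, ha⟩ := by
  classical
  obtain ⟨g, hgc, hgA⟩ := hA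
  obtain ⟨I, U, lam, hUopen, hUlf, hUcov, hlamc, hconv⟩ := hwc
  -- membership in A characterized by g
  have hmemA : ∀ x, x ∈ A ↔ g x = 0 := by
    intro x
    constructor
    · intro hx
      by_contra h
      have hx' : x ∈ Aᶜ := by rw [hgA]; exact h
      exact hx' hx
    · intro h
      by_contra hx
      have : x ∈ g ⁻¹' ({0}ᶜ : Set ℝ) := by rw [← hgA]; exact hx
      exact this h
  choose F hFc hFU using hUopen
  set f : ∀ n, I n → X → ℝ := fun n i x => (F n i x)^2 with hf
  have hfc : ∀ n i, Continuous (f n i) := fun n i => (hFc n i).pow 2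
  have hf0 : ∀ n i x, 0 ≤ f n i x := fun n i x => sq_nonneg _
  have hfne : ∀ n i x, f n i x ≠ 0 ↔ x ∈ U n i := by
    intro n i x
    rw [hFU n i]
    simp [hf, pow_eq_zero_iff]
  have hUo : ∀ n i, IsOpen (U n i) := by
    intro n i
    rw [hFU n i]
    exact isOpen_compl_singleton.preimage (hFc n i)
  have hlf : ∀ n, LocallyFinite (U n) := by
    intro n x
    obtain ⟨V, hV, hfin⟩ := hUlf n x
    exact ⟨V, hV, hfin.subset fun i hi => by rw [Set.mem_setOf_eq, inter_comm] at hi; exact hi⟩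
  have hptfin : ∀ n x, {i : I n | x ∈ U n i}.Finite := by
    intro n x
    obtain ⟨V, hV, hfin⟩ := hUlf n x
    exact hfin.subset fun i hi => ⟨x, mem_of_mem_nhds hV, hi⟩
  have hsuppfin : ∀ n x, (Function.support fun i => f n i x).Finite := by
    intro n x
    exact (hptfin n x).subset fun i hi => (hfne n i x).1 hi
  set s : ℕ → X → ℝ := fun n x => ∑ᶠ i, f n i x with hs
  have hsc : ∀ n, Continuous (s n) := by
    intro n
    exact continuous_finsum (fun i => hfc n i)
      ((hlf n).subset fun i x hx => (hfne n i x).1 hx)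
  have hs0 : ∀ n x, 0 ≤ s n x := fun n x => finsum_nonneg fun i => hf0 n i x
  have hsf : ∀ n i x, f n i x ≤ s n x := fun n i x =>
    single_le_finsum i (hsuppfin n x) fun j => hf0 n j x
  have hsA : ∀ n x, x ∈ A → 0 < s n x := by
    intro n x hx
    obtain ⟨_, ⟨i, rfl⟩, hiU⟩ := hUcov n hx
    have h1 : f n i x ≠ 0 := (hfne n i x).2 hiU
    exact lt_of_lt_of_le (lt_of_le_of_ne (hf0 n i x) (Ne.symm h1)) (hsf n i x)
  set r : X → ℝ := fun x => min (g x ^ 2) 1 with hr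
  have hrc : Continuous r := (hgc.pow 2).min continuous_const
  have hr0 : ∀ x, 0 ≤ r x := fun x => le_min (sq_nonneg _) zero_le_one
  have hrA : ∀ x, x ∈ A ↔ r x = 0 := by
    intro x
    rw [hmemA x, hr]
    constructor
    · intro h; simp [h]
    · intro h
      rcases min_eq_iff.1 h with h1 | h1
      · exact pow_eq_zero_iff (n := 2) (by norm_num) |>.1 h1.1
      · norm_num at h1
  have hrpos : ∀ x, x ∉ A → 0 < r x := fun x hx =>
    lt_of_le_of_ne (hr0 x) fun h => hx ((hrA x).2 h.symm)
  have hmax : ∀ n x, 0 < max (s n x) (r x) := by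
    intro n x
    by_cases hx : x ∈ A
    · exact lt_max_of_lt_left (hsA n x hx)
    · exact lt_max_of_lt_right (hrpos x hx)
  set q : ℕ → X → ℝ := fun n x => (max (s n x) (r x))⁻¹ with hq
  have hqc : ∀ n, Continuous (q n) := fun n =>
    ((hsc n).max hrc).inv₀ fun x => (hmax n x).ne'
  have hq0 : ∀ n x, 0 ≤ q n x := fun n x => inv_nonneg.2 (hmax n x).le
  set d : ℕ → X → ℝ := fun n x => s n x * q n x with hd
  have hdc : ∀ n, Continuous (d n) := fun n => (hsc n).mul (hqc n)
  have hd0 : ∀ n x, 0 ≤ d n x := fun n x => mul_nonneg (hs0 n x) (hq0 n x)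
  have hd1 : ∀ n x, d n x ≤ 1 := by
    intro n x
    rw [hd]
    simp only
    rw [← div_eq_mul_inv]
    exact div_le_one_of_le₀ (le_max_left _ _) (hmax n x).le
  have hdA : ∀ n x, x ∈ A → d n x = 1 := by
    intro n x hx
    have h1 : r x = 0 := (hrA x).1 hx
    rw [hd, hq]
    simp only [h1]
    rw [max_eq_left (hs0 n x)]
    exact mul_inv_cancel₀ (hsA n x hx).ne'
  set γ : ℕ → X → ℝ := fun n x => max 0 (min 1 (2 - ((n:ℝ)+1) * r x)) with hγ
  have hγc : ∀ n, Continuous (γ n) := fun n =>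
    continuous_const.max (continuous_const.min
      (continuous_const.sub (continuous_const.mul hrc)))
  have hγ0 : ∀ n x, 0 ≤ γ n x := fun n x => le_max_left _ _
  have hγ1 : ∀ n x, γ n x ≤ 1 := fun n x =>
    max_le zero_le_one (min_le_left _ _)
  have hγA : ∀ n x, x ∈ A → γ n x = 1 := by
    intro n x hx
    rw [hγ]
    simp only [(hrA x).1 hx, mul_zero, sub_zero]
    norm_num
  have hγzero : ∀ (n : ℕ) (x : X), 2 ≤ ((n:ℝ)+1) * r x → γ n x = 0 := by
    intro n x h
    rw [hγ]
    simp only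
    rw [max_eq_left]
    exact min_le_of_right_le (by linarith)
  set δ : ℕ → X → ℝ := fun n x => d n x * γ n x with hδ
  have hδc : ∀ n, Continuous (δ n) := fun n => (hdc n).mul (hγc n)
  have hδ0 : ∀ n x, 0 ≤ δ n x := fun n x => mul_nonneg (hd0 n x) (hγ0 n x)
  have hδ1 : ∀ n x, δ n x ≤ 1 := fun n x =>
    mul_le_one₀ (hd1 n x) (hγ0 n x) (hγ1 n x)
  have hδA : ∀ n x, x ∈ A → δ n x = 1 := by
    intro n x hx
    rw [hδ]
    simp only [hdA n x hx, hγA n x hx, mul_one]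
  set Q : ℕ → X → ℝ := fun n x => ∏ k ∈ Finset.range n, δ k x with hQ
  have hQc : ∀ n, Continuous (Q n) := by
    intro n
    apply continuous_finset_prod
    exact fun k _ => hδc k
  have hQ0 : ∀ n x, 0 ≤ Q n x := fun n x =>
    Finset.prod_nonneg fun k _ => hδ0 k x
  have hQ1 : ∀ n x, Q n x ≤ 1 := fun n x =>
    Finset.prod_le_one (fun k _ => hδ0 k x) fun k _ => hδ1 k x
  have hQA : ∀ n x, x ∈ A → Q n x = 1 := by
    intro n x hx
    rw [hQ]
    exact Finset.prod_eq_one fun k _ => hδA k x hx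
  set w : ℕ → X → ℝ := fun n x => Q n x * γ n x * q n x * (1 - δ (n+1) x) with hw
  have hwcont : ∀ n, Continuous (w n) := fun n =>
    (((hQc n).mul (hγc n)).mul (hqc n)).mul
      (continuous_const.sub (hδc (n+1)))
  have hw0 : ∀ n x, 0 ≤ w n x := fun n x =>
    mul_nonneg (mul_nonneg (mul_nonneg (hQ0 n x) (hγ0 n x)) (hq0 n x))
      (by linarith [hδ1 (n+1) x])
  have hwA : ∀ n x, x ∈ A → w n x = 0 := by
    intro n x hx
    rw [hw]
    simp [hδA (n+1) x hx]
  have hwγ : ∀ n x, γ n x = 0 → w n x = 0 := by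
    intro n x h
    rw [hw]
    simp [h]
  have hws : ∀ n x, w n x * s n x = Q (n+1) x - Q (n+2) x := by
    intro n x
    rw [hw, hQ]
    simp only [Finset.prod_range_succ, hδ, hd]
    ring
  -- the maps t n i y and their sums S n y
  set t : ∀ n (i : I n), Cp ↥A → X → ℝ := fun n i y x =>
    f n i x * (if h : x ∈ closure (U n i) then y.1 (lam n i ⟨x, h⟩) else 0) with ht
  have htsuppx : ∀ n (i : I n) (y : Cp ↥A) x, t n i y x ≠ 0 → f n i x ≠ 0 := by
    intro n i y x h h0
    exact h (by rw [ht]; simp only; rw [h0, zero_mul])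
  have htc : ∀ n (i : I n) (y : Cp ↥A), Continuous (t n i y) := by
    intro n i y
    have hm : Continuous fun z : closure (U n i) => y.1 (lam n i z) := y.2.comp (hlamc n i)
    rw [continuous_iff_continuousAt]
    intro x₀
    by_cases hcl : x₀ ∈ closure (U n i)
    · by_cases hU : x₀ ∈ U n i
      · have hco : ContinuousOn
            (fun x => if h : x ∈ closure (U n i) then y.1 (lam n i ⟨x, h⟩) else 0)
            (closure (U n i)) := by
          rw [continuousOn_iff_continuous_restrict]
          convert hm using 1
          funext z
          rw [Set.restrict_apply, dif_pos z.2]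
        have hnb : closure (U n i) ∈ 𝓝 x₀ :=
          mem_nhds_iff.2 ⟨U n i, subset_closure, hUo n i, hU⟩
        exact ((hfc n i).continuousAt).mul (hco.continuousAt hnb)
      · have hfx0 : f n i x₀ = 0 := by
          by_contra h
          exact hU ((hfne n i x₀).1 h)
        set C : ℝ := |y.1 (lam n i ⟨x₀, hcl⟩)| + 1 with hC
        have hC0 : 0 ≤ C := by rw [hC]; positivity
        have hopen : IsOpen {z : closure (U n i) |
            |y.1 (lam n i z) - y.1 (lam n i ⟨x₀, hcl⟩)| < 1} := by
          have heq : {z : closure (U n i) |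
              |y.1 (lam n i z) - y.1 (lam n i ⟨x₀, hcl⟩)| < 1}
              = (fun z : closure (U n i) => y.1 (lam n i z)) ⁻¹'
                  Metric.ball (y.1 (lam n i ⟨x₀, hcl⟩)) 1 := by
            ext z; simp [Metric.mem_ball, Real.dist_eq]
          rw [heq]
          exact hm.isOpen_preimage _ Metric.isOpen_ball
        obtain ⟨O, hOo, hOeq⟩ := isOpen_induced_iff.1 hopen
        have hx₀O : x₀ ∈ O := by
          have hmem : (⟨x₀, hcl⟩ : closure (U n i)) ∈ {z : closure (U n i) |
              |y.1 (lam n i z) - y.1 (lam n i ⟨x₀, hcl⟩)| < 1} := by simp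
          rw [← hOeq] at hmem; exact hmem
        have hbound : ∀ x ∈ O, ‖t n i y x‖ ≤ f n i x * C := by
          intro x hx
          by_cases hxc : x ∈ closure (U n i)
          · have hz : (⟨x, hxc⟩ : closure (U n i)) ∈ {z : closure (U n i) |
                |y.1 (lam n i z) - y.1 (lam n i ⟨x₀, hcl⟩)| < 1} := by
              rw [← hOeq]; exact hx
            simp only [Set.mem_setOf_eq] at hz
            have h2 : |y.1 (lam n i ⟨x, hxc⟩)| ≤ C := by
              have h3 := abs_sub_abs_le_abs_sub (y.1 (lam n i ⟨x, hxc⟩))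
                (y.1 (lam n i ⟨x₀, hcl⟩))
              rw [hC]; linarith
            rw [ht]
            simp only [dif_pos hxc, Real.norm_eq_abs, abs_mul,
              abs_of_nonneg (hf0 n i x)]
            exact mul_le_mul_of_nonneg_left h2 (hf0 n i x)
          · rw [ht]
            simp only [dif_neg hxc, mul_zero, norm_zero]
            exact mul_nonneg (hf0 n i x) hC0
        have ht0 : t n i y x₀ = 0 := by rw [ht]; simp only; rw [hfx0, zero_mul]
        have htend : Filter.Tendsto (t n i y) (𝓝 x₀) (𝓝 0) := by
          apply squeeze_zero_norm' (Filter.eventually_of_mem (hOo.mem_nhds hx₀O) hbound)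
          have h4 : Filter.Tendsto (fun x => f n i x * C) (𝓝 x₀) (𝓝 (f n i x₀ * C)) :=
            ((hfc n i).mul continuous_const).tendsto x₀
          rwa [hfx0, zero_mul] at h4
        show Filter.Tendsto (t n i y) (𝓝 x₀) (𝓝 (t n i y x₀))
        rw [ht0]
        exact htend
    · have hopen : IsOpen (closure (U n i))ᶜ := isClosed_closure.isOpen_compl
      refine ContinuousAt.congr (continuousAt_const (y := (0:ℝ))) ?_
      refine Filter.eventuallyEq_of_mem (hopen.mem_nhds hcl) fun x hx => ?_
      have hxU : x ∉ closure (U n i) := hx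
      rw [ht]
      simp only
      rw [dif_neg hxU, mul_zero]
  set S : ∀ n, Cp ↥A → X → ℝ := fun n y x => ∑ᶠ i, t n i y x with hS
  have hSc : ∀ n (y : Cp ↥A), Continuous fun x => S n y x := by
    intro n y
    rw [hS]
    exact continuous_finsum (fun i => htc n i y)
      ((hlf n).subset fun i x hx => (hfne n i x).1 (htsuppx n i y x hx))
  have hSsum : ∀ n (y : Cp ↥A) x, S n y x = ∑ i ∈ (hsuppfin n x).toFinset, t n i y x := by
    intro n y x
    rw [hS]
    apply finsum_eq_sum_of_support_subset
    intro i hi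
    rw [Set.Finite.coe_toFinset]
    exact htsuppx n i y x hi
  have hssum : ∀ n x, s n x = ∑ i ∈ (hsuppfin n x).toFinset, f n i x := by
    intro n x
    rw [hs]
    apply finsum_eq_sum_of_support_subset
    rw [Set.Finite.coe_toFinset]
  have hSbound : ∀ n (y : Cp ↥A) x (c ε' : ℝ), 0 ≤ ε' →
      (∀ i (hi : x ∈ U n i), |y.1 (lam n i ⟨x, subset_closure hi⟩) - c| ≤ ε') →
      |S n y x - s n x * c| ≤ ε' * s n x := by
    intro n y x c ε' hε' hyp
    have e1 : S n y x - s n x * c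
        = ∑ i ∈ (hsuppfin n x).toFinset, (t n i y x - f n i x * c) := by
      rw [hSsum n y x, hssum n x, Finset.sum_sub_distrib, Finset.sum_mul]
    rw [e1]
    have key : ∀ i ∈ (hsuppfin n x).toFinset, |t n i y x - f n i x * c| ≤ f n i x * ε' := by
      intro i hi
      have hfi : f n i x ≠ 0 := (Set.Finite.mem_toFinset _).1 hi
      have hU : x ∈ U n i := (hfne n i x).1 hfi
      have hcl : x ∈ closure (U n i) := subset_closure hU
      rw [ht]
      simp only [dif_pos hcl]
      rw [← mul_sub, abs_mul, abs_of_nonneg (hf0 n i x)]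
      exact mul_le_mul_of_nonneg_left (hyp i hU) (hf0 n i x)
    calc |∑ i ∈ (hsuppfin n x).toFinset, (t n i y x - f n i x * c)|
        ≤ ∑ i ∈ (hsuppfin n x).toFinset, |t n i y x - f n i x * c| :=
          Finset.abs_sum_le_sum_abs _ _
      _ ≤ ∑ i ∈ (hsuppfin n x).toFinset, f n i x * ε' := Finset.sum_le_sum key
      _ = ε' * s n x := by
          rw [hssum n x, Finset.mul_sum]
          exact Finset.sum_congr rfl fun i _ => mul_comm _ _
  have hbig : ∀ x, x ∉ A → ∃ N, ∀ n ≥ N, γ n x = 0 := by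
    intro x hx
    have hrx := hrpos x hx
    refine ⟨⌈(2:ℝ) / r x⌉₊, fun n hn => hγzero n x ?_⟩
    have h1 : (2:ℝ) / r x ≤ n := le_trans (Nat.le_ceil _) (by exact_mod_cast hn)
    have h2 : (2:ℝ) ≤ n * r x := by
      rw [div_le_iff₀ hrx] at h1; linarith
    nlinarith [hr0 x]
  set ψraw : X → Cp ↥A → ℝ := fun x y =>
    (∑ᶠ n, w n x * S n y x) + (if h : x ∈ A then y.1 ⟨x, h⟩ else 0) with hψr
  have hψA : ∀ (x) (hx : x ∈ A), ψraw x = fun y : Cp ↥A => y.1 ⟨x, hx⟩ := by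
    intro x hx
    funext y
    rw [hψr]
    simp only
    rw [dif_pos hx]
    have hz : (fun n => w n x * S n y x) = fun _ => (0:ℝ) :=
      funext fun n => by rw [hwA n x hx, zero_mul]
    rw [hz, finsum_zero, zero_add]
  have hwSsupp : ∀ x (N : ℕ), (∀ n ≥ N, γ n x = 0) → ∀ y : Cp ↥A,
      (∑ᶠ n, w n x * S n y x) = ∑ n ∈ Finset.range N, w n x * S n y x := by
    intro x N hN y
    apply finsum_eq_sum_of_support_subset
    intro n hn
    simp only [Function.mem_support] at hn
    simp only [Finset.coe_range, Set.mem_Iio]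
    by_contra h
    push_neg at h
    exact hn (by rw [hwγ n x (hN n h), zero_mul])
  have hψmem : ∀ x, ψraw x ∈ LSet ↥A := by
    intro x
    by_cases hx : x ∈ A
    · rw [hψA x hx]
      refine ⟨1, fun _ => ⟨x, hx⟩, fun _ => 1, ?_⟩
      funext y; simp
    · obtain ⟨N, hN⟩ := hbig x hx
      have hrep : ψraw x = fun y : Cp ↥A => ∑ n ∈ Finset.range N,
          (fun y : Cp ↥A => ∑ i ∈ (hsuppfin n x).toFinset,
            (fun y : Cp ↥A => w n x * t n i y x) y) y := by
        funext y
        rw [hψr]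
        simp only
        rw [dif_neg hx, add_zero, hwSsupp x N hN y]
        refine Finset.sum_congr rfl fun n _ => ?_
        rw [hSsum n y x, Finset.mul_sum]
      rw [hrep]
      apply lset_finsetSum
      intro n _
      apply lset_finsetSum
      intro i _
      by_cases hcl : x ∈ closure (U n i)
      · have heq : (fun y : Cp ↥A => w n x * t n i y x)
            = fun y : Cp ↥A => (w n x * f n i x) * y.1 (lam n i ⟨x, hcl⟩) := by
          funext y
          rw [ht]
          simp only [dif_pos hcl]
          ring
        rw [heq]
        exact lset_single _ _
      · have heq : (fun y : Cp ↥A => w n x * t n i y x) = fun _ => (0:ℝ) := by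
          funext y
          rw [ht]
          simp only [dif_neg hcl, mul_zero]
        rw [heq]
        exact lset_zero ↥A
  have hψcont : ∀ y : Cp ↥A, Continuous fun x => ψraw x y := by
    intro y
    rw [continuous_iff_continuousAt]
    intro a
    by_cases ha : a ∈ A
    · -- continuity at points of A
      show Filter.Tendsto (fun x => ψraw x y) (𝓝 a) (𝓝 (ψraw a y))
      have hval : ψraw a y = y.1 ⟨a, ha⟩ := by rw [hψA a ha]
      rw [hval, Metric.tendsto_nhds]
      intro ε hε
      set ε' := ε/4 with hε'def
      have hε' : 0 < ε' := by positivity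
      set ya := y.1 ⟨a, ha⟩ with hya
      have hVmem : y.1 ⁻¹' Metric.ball ya ε' ∈ 𝓝 (⟨a, ha⟩ : ↥A) :=
        y.2.continuousAt.preimage_mem_nhds (Metric.ball_mem_nhds _ hε')
      obtain ⟨n₀, U₀, hU₀, hVprop⟩ := hconv a ha _ hVmem
      obtain ⟨O, hOnhds, hOsub⟩ := mem_nhds_subtype A ⟨a, ha⟩ _ |>.1 hVmem
      have hGc : Continuous fun x => ∑ n ∈ Finset.range n₀, w n x * S n y x :=
        continuous_finset_sum _ fun n _ => (hwcont n).mul (hSc n y)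
      have hGa : (∑ n ∈ Finset.range n₀, w n a * S n y a) = 0 :=
        Finset.sum_eq_zero fun n _ => by rw [hwA n a ha, zero_mul]
      have hev1 : ∀ᶠ x in 𝓝 a, |∑ n ∈ Finset.range n₀, w n x * S n y x| < ε' := by
        have h1 := Metric.tendsto_nhds.1 (hGc.tendsto a) ε' hε'
        refine h1.mono fun x hx => ?_
        rwa [Real.dist_eq, hGa, sub_zero] at hx
      have hQa : Q (n₀+1) a = 1 := hQA (n₀+1) a ha
      have hε'' : 0 < ε' / (|ya| + 1) := by positivity
      have hev2 : ∀ᶠ x in 𝓝 a, |Q (n₀+1) x - 1| < ε' / (|ya| + 1) := by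
        have h1 := Metric.tendsto_nhds.1 ((hQc (n₀+1)).tendsto a) _ hε''
        refine h1.mono fun x hx => ?_
        rwa [Real.dist_eq, hQa] at hx
      filter_upwards [hev1, hev2, hU₀, hOnhds] with x hx1 hx2 hxU₀ hxO
      by_cases hxA : x ∈ A
      · have hxeq : ψraw x y = y.1 ⟨x, hxA⟩ := by rw [hψA x hxA]
        rw [hxeq]
        have hmem : (⟨x, hxA⟩ : ↥A) ∈ y.1 ⁻¹' Metric.ball ya ε' := hOsub hxO
        have h5 : dist (y.1 ⟨x, hxA⟩) ya < ε' := hmem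
        calc dist (y.1 ⟨x, hxA⟩) ya < ε' := h5
          _ < ε := by rw [hε'def]; linarith
      · obtain ⟨N₀, hN₀⟩ := hbig x hxA
        set N₁ := max N₀ n₀ with hN₁def
        have hn₀N₁ : n₀ ≤ N₁ := le_max_right _ _
        have hγN : ∀ n ≥ N₁, γ n x = 0 := fun n hn =>
          hN₀ n (le_trans (le_max_left _ _) hn)
        have hψx : ψraw x y = ∑ n ∈ Finset.range N₁, w n x * S n y x := by
          rw [hψr]
          simp only
          rw [dif_neg hxA, add_zero, hwSsupp x N₁ hγN y]
        have hQN₁zero : Q (N₁+1) x = 0 := by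
          rw [hQ]
          refine Finset.prod_eq_zero (Finset.self_mem_range_succ N₁) ?_
          rw [hδ]
          simp only
          rw [hγN N₁ le_rfl, mul_zero]
        have htel : ∑ n ∈ Finset.Ico n₀ N₁, w n x * s n x = Q (n₀+1) x := by
          rw [Finset.sum_Ico_eq_sum_range]
          have h2 : ∀ j ∈ Finset.range (N₁ - n₀), w (n₀+j) x * s (n₀+j) x
              = (fun j => Q (n₀+j+1) x) j - (fun j => Q (n₀+j+1) x) (j+1) := by
            intro j _
            exact hws (n₀+j) x
          rw [Finset.sum_congr rfl h2, Finset.sum_range_sub']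
          show Q (n₀+0+1) x - Q (n₀+(N₁-n₀)+1) x = Q (n₀+1) x
          rw [show n₀+0+1 = n₀+1 by omega, show n₀+(N₁-n₀)+1 = N₁+1 by omega,
            hQN₁zero, sub_zero]
        have hterm : ∀ n ∈ Finset.Ico n₀ N₁, |S n y x - s n x * ya| ≤ ε' * s n x := by
          intro n hn
          have hn' : n₀ ≤ n := (Finset.mem_Ico.1 hn).1
          refine hSbound n y x ya ε' hε'.le fun i hi => ?_
          have h5 : lam n i ⟨x, subset_closure (And.intro hi hxU₀).1⟩
              ∈ y.1 ⁻¹' Metric.ball ya ε' := hVprop n hn' i x ⟨hi, hxU₀⟩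
          have h6 : dist (y.1 (lam n i ⟨x, subset_closure hi⟩)) ya < ε' := h5
          rw [Real.dist_eq] at h6
          exact h6.le
        have hsum2 : |∑ n ∈ Finset.Ico n₀ N₁, w n x * S n y x - ya * Q (n₀+1) x| ≤ ε' := by
          have e2 : ∑ n ∈ Finset.Ico n₀ N₁, w n x * S n y x - ya * Q (n₀+1) x
              = ∑ n ∈ Finset.Ico n₀ N₁, (w n x * (S n y x - s n x * ya)) := by
            rw [← htel]
            rw [Finset.mul_sum, ← Finset.sum_sub_distrib]
            refine Finset.sum_congr rfl fun n _ => ?_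
            ring
          rw [e2]
          calc |∑ n ∈ Finset.Ico n₀ N₁, w n x * (S n y x - s n x * ya)|
              ≤ ∑ n ∈ Finset.Ico n₀ N₁, |w n x * (S n y x - s n x * ya)| :=
                Finset.abs_sum_le_sum_abs _ _
            _ ≤ ∑ n ∈ Finset.Ico n₀ N₁, w n x * (ε' * s n x) := by
                refine Finset.sum_le_sum fun n hn => ?_
                rw [abs_mul, abs_of_nonneg (hw0 n x)]
                exact mul_le_mul_of_nonneg_left (hterm n hn) (hw0 n x)
            _ = ε' * ∑ n ∈ Finset.Ico n₀ N₁, w n x * s n x := by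
                rw [Finset.mul_sum]
                exact Finset.sum_congr rfl fun n _ => by ring
            _ = ε' * Q (n₀+1) x := by rw [htel]
            _ ≤ ε' := by nlinarith [hQ1 (n₀+1) x, hQ0 (n₀+1) x]
        have h3 : |ya * Q (n₀+1) x - ya| ≤ ε' := by
          have e3 : ya * Q (n₀+1) x - ya = ya * (Q (n₀+1) x - 1) := by ring
          rw [e3, abs_mul]
          have h7 : (0:ℝ) < |ya| + 1 := by positivity
          calc |ya| * |Q (n₀+1) x - 1| ≤ (|ya| + 1) * |Q (n₀+1) x - 1| := by
                nlinarith [abs_nonneg (Q (n₀+1) x - 1), abs_nonneg ya]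
            _ ≤ (|ya| + 1) * (ε' / (|ya| + 1)) := by nlinarith [abs_nonneg ya]
            _ = ε' := by field_simp
        rw [Real.dist_eq, hψx, ← Finset.sum_range_add_sum_Ico _ hn₀N₁]
        have habs : |(∑ n ∈ Finset.range n₀, w n x * S n y x)
            + (∑ n ∈ Finset.Ico n₀ N₁, w n x * S n y x) - ya|
            ≤ |∑ n ∈ Finset.range n₀, w n x * S n y x|
              + (|∑ n ∈ Finset.Ico n₀ N₁, w n x * S n y x - ya * Q (n₀+1) x|
                + |ya * Q (n₀+1) x - ya|) := by
          calc |(∑ n ∈ Finset.range n₀, w n x * S n y x)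
              + (∑ n ∈ Finset.Ico n₀ N₁, w n x * S n y x) - ya|
              = |(∑ n ∈ Finset.range n₀, w n x * S n y x)
                + ((∑ n ∈ Finset.Ico n₀ N₁, w n x * S n y x - ya * Q (n₀+1) x)
                  + (ya * Q (n₀+1) x - ya))| := by congr 1; ring
            _ ≤ _ := by
                refine le_trans (abs_add_le _ _) ?_
                exact add_le_add le_rfl (abs_add_le _ _)
        have : |(∑ n ∈ Finset.range n₀, w n x * S n y x)
            + (∑ n ∈ Finset.Ico n₀ N₁, w n x * S n y x) - ya| < ε' + (ε' + ε') := by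
          refine lt_of_le_of_lt habs ?_
          have := add_le_add hsum2 h3
          linarith
        have hε4 : ε' = ε/4 := hε'def
        linarith
    · -- continuity at points outside A
      have hra := hrpos a ha
      have hPo : IsOpen {x | r a / 2 < r x} := isOpen_lt continuous_const hrc
      have haP : a ∈ {x | r a / 2 < r x} := by
        simp only [Set.mem_setOf_eq]
        linarith
      set N₁ := ⌈(4:ℝ) / r a⌉₊ with hN₁def
      have hγP : ∀ x ∈ {x | r a / 2 < r x}, ∀ n ≥ N₁, γ n x = 0 := by
        intro x hx n hn
        apply hγzero
        have h1 : (4:ℝ) / r a ≤ n := le_trans (Nat.le_ceil _) (by exact_mod_cast hn)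
        have h2 : r a / 2 < r x := hx
        have h3 : (4:ℝ) ≤ n * r a := by rw [div_le_iff₀ hra] at h1; linarith
        have h4 : (0:ℝ) ≤ n := Nat.cast_nonneg n
        have h5 : (n:ℝ) * (r a / 2) ≤ (n:ℝ) * r x := mul_le_mul_of_nonneg_left h2.le h4
        have h6 : (n:ℝ) * (r a / 2) = ((n:ℝ) * r a) / 2 := by ring
        have h7 : (0:ℝ) ≤ r x := hr0 x
        nlinarith
      have hxAP : ∀ x ∈ {x | r a / 2 < r x}, x ∉ A := by
        intro x hx hxA
        have h8 := (hrA x).1 hxA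
        have h9 : r a / 2 < r x := hx
        linarith
      have heq : ∀ x ∈ {x | r a / 2 < r x},
          ψraw x y = ∑ n ∈ Finset.range N₁, w n x * S n y x := by
        intro x hx
        rw [hψr]
        simp only
        rw [dif_neg (hxAP x hx), add_zero, hwSsupp x N₁ (hγP x hx) y]
      have hc : Continuous fun x => ∑ n ∈ Finset.range N₁, w n x * S n y x :=
        continuous_finset_sum _ fun n _ => (hwcont n).mul (hSc n y)
      refine ContinuousAt.congr hc.continuousAt ?_
      exact Filter.eventuallyEq_of_mem (hPo.mem_nhds haP) fun x hx => (heq x hx).symm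
  refine ⟨fun x => ⟨ψraw x, hψmem x⟩, ?_, ?_⟩
  · exact Continuous.subtype_mk (continuous_pi hψcont) hψmem
  · intro a ha
    exact hψA a ha
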